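/- Let n ≥ 3 be an integer, r₀ > 0 and m ∈ ℝ with 1 + s₀ > 0, where s₀ := m/(2r₀^{n−2}). With D := −((n−2)/r₀)(1+s₀)^{−n/(n−2)}, H := ((n−1)/r₀)(1−s₀)(1+s₀)^{−n/(n−2)} and R := r₀(1+s₀)^{2/(n−2)}, one has −2((n−1)/(n−2)) · D − H = (n−1)/R. Since the first Dirac eigenvalue of a round (n−1)-sphere of radius R is (n−1)/(2R), this identity shows that the exterior Schwarzschild region M^n_m(r₀) attains equality in the eigenvalue estimate λ₁(D_γ) ≥ (1/2)·min_Σ(−2((n−1)/(n−2)) ∂φ/∂ν − H) of Theorem 1.4. -/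
import Mathlib


/-- In the Riemannian Schwarzschild manifold of mass `m`, with `s₀ = m/(2r₀^{n−2})`,
`D = −((n−2)/r₀)(1+s₀)^{−n/(n−2)}` the normal derivative of the boundary capacity potential,
`H = ((n−1)/r₀)(1−s₀)(1+s₀)^{−n/(n−2)}` the mean curvature of `Σ_{r₀}` and
`R = r₀(1+s₀)^{2/(n−2)}` its area radius, one has
`−2((n−1)/(n−2)) D − H = (n−1)/R`: since the first Dirac eigenvalue of a round sphere of
radius `R` is `(n−1)/(2R)`, the Schwarzschild exterior attains equality in Theorem 1.4. -/
theorem stmt5 (n : ℕ) (hn : 3 ≤ n) (r₀ m s₀ D H R : ℝ) (hr₀ : 0 < r₀)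
    (hs₀def : s₀ = m / (2 * r₀ ^ ((n : ℝ) - 2))) (hs₀ : 0 < 1 + s₀)
    (hD : D = -(((n : ℝ) - 2) / r₀) * (1 + s₀) ^ (-(n : ℝ) / ((n : ℝ) - 2)))
    (hH : H = (((n : ℝ) - 1) / r₀) * (1 - s₀) * (1 + s₀) ^ (-(n : ℝ) / ((n : ℝ) - 2)))
    (hR : R = r₀ * (1 + s₀) ^ ((2 : ℝ) / ((n : ℝ) - 2))) :
    -2 * (((n : ℝ) - 1) / ((n : ℝ) - 2)) * D - H = ((n : ℝ) - 1) / R := by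
  have hn2 : ((n : ℝ) - 2) ≠ 0 := by
    have : (3 : ℝ) ≤ (n : ℝ) := by exact_mod_cast hn
    linarith
  have hpos := hs₀
  have h1 : -2 * (((n : ℝ) - 1) / ((n : ℝ) - 2)) * D - H
      = (((n : ℝ) - 1) / r₀) * (1 + s₀) * (1 + s₀) ^ (-(n : ℝ) / ((n : ℝ) - 2)) := by
    rw [hD, hH]; field_simp; ring
  rw [h1, hR]
  have h2 : (1 + s₀) * (1 + s₀) ^ (-(n : ℝ) / ((n : ℝ) - 2))
      = (1 + s₀) ^ (1 + -(n : ℝ) / ((n : ℝ) - 2)) := by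
    rw [Real.rpow_add hpos, Real.rpow_one]
  have h3 : (1 : ℝ) + -(n : ℝ) / ((n : ℝ) - 2) = -((2 : ℝ) / ((n : ℝ) - 2)) := by
    field_simp
    ring
  rw [mul_assoc, h2, h3, Real.rpow_neg hpos.le]
  have hRpos : (0 : ℝ) < (1 + s₀) ^ ((2 : ℝ) / ((n : ℝ) - 2)) := Real.rpow_pos_of_pos hpos _
  field_simp
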